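/- The Adler–Yamilov map satisfies the parametric Yang–Baxter equation: for all parameters a, b, c ∈ ℂ and all (x,y,z) ∈ (ℂ²)³ such that every denominator arising in both composite maps is nonzero, the two compositions Y¹²_{a,b} ∘ Y¹³_{a,c} ∘ Y²³_{b,c} and Y²³_{b,c} ∘ Y¹³_{a,c} ∘ Y¹²_{a,b} agree at (x,y,z). -/

import Mathlib

set_option maxHeartbeats 4000000


/-- First component `u` of the Adler–Yamilov map. -/
noncomputable def ayU (a b : ℂ) (x y : ℂ × ℂ) : ℂ × ℂ :=
  (y.1 - ((a - b) / (1 + x.1 * y.2)) * x.1, y.2)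

/-- Second component `v` of the Adler–Yamilov map. -/
noncomputable def ayV (a b : ℂ) (x y : ℂ × ℂ) : ℂ × ℂ :=
  (x.1, x.2 + ((a - b) / (1 + x.1 * y.2)) * y.2)

/-- The Adler–Yamilov map satisfies the parametric Yang–Baxter equation
`Y¹²_{a,b} ∘ Y¹³_{a,c} ∘ Y²³_{b,c} = Y²³_{b,c} ∘ Y¹³_{a,c} ∘ Y¹²_{a,b}`,
wherever all the denominators arising in both composite maps are nonzero. -/
theorem adler_yamilov_yang_baxter (a b c : ℂ) (x y z : ℂ × ℂ)
    -- denominators in Y¹²_{a,b} ∘ Y¹³_{a,c} ∘ Y²³_{b,c} (applied right-to-left)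
    (h1 : 1 + y.1 * z.2 ≠ 0)
    (h2 : 1 + x.1 * (ayV b c y z).2 ≠ 0)
    (h3 : 1 + (ayU a c x (ayV b c y z)).1 * (ayU b c y z).2 ≠ 0)
    -- denominators in Y²³_{b,c} ∘ Y¹³_{a,c} ∘ Y¹²_{a,b} (applied right-to-left)
    (h4 : 1 + x.1 * y.2 ≠ 0)
    (h5 : 1 + (ayU a b x y).1 * z.2 ≠ 0)
    (h6 : 1 + (ayV a b x y).1 * (ayV a c (ayU a b x y) z).2 ≠ 0) :
    (ayU a b (ayU a c x (ayV b c y z)) (ayU b c y z),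
     ayV a b (ayU a c x (ayV b c y z)) (ayU b c y z),
     ayV a c x (ayV b c y z))
    =
    (ayU a c (ayU a b x y) z,
     ayU b c (ayV a b x y) (ayV a c (ayU a b x y) z),
     ayV b c (ayV a b x y) (ayV a c (ayU a b x y) z)) := by
  simp only [ayU, ayV] at *
  obtain ⟨x1,x2⟩ := x; obtain ⟨y1,y2⟩ := y; obtain ⟨z1,z2⟩ := z
  simp only [Prod.mk.injEq] at *
  field_simp at h2 h5
  rw [div_ne_zero_iff] at h2 h5
  replace h2 := h2.1
  replace h5 := h5.1
  field_simp at h3 h6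
  rw [div_ne_zero_iff] at h3 h6
  replace h3 := h3.1
  replace h6 := h6.1
  have h4a : 1 + y2 * x1 ≠ 0 := by convert h4 using 1; ring
  have h2a : 1 + y1 * z2 + x1 * ((1 + y1 * z2) * y2 + (b - c) * z2) ≠ 0 := by convert h2 using 1; ring
  have h2b : 1 + y1 * z2 + (y2 * (1 + y1 * z2) + (b - c) * z2) * x1 ≠ 0 := by convert h2 using 1; ring
  have h5a : 1 + x1 * y2 + z2 * (y1 * (1 + x1 * y2) - (a - b) * x1) ≠ 0 := by convert h5 using 1; ring
  have h5b : 1 + y2 * x1 + z2 * (y1 * (1 + y2 * x1) - (a - b) * x1) ≠ 0 := by convert h5 using 1; ring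
  have h3a : 1 + y1 * z2 + x1 * ((1 + y1 * z2) * y2 + (b - c) * z2) + z2 * (y1 * (1 + y1 * z2 + x1 * ((1 + y1 * z2) * y2 + (b - c) * z2)) - (1 + y1 * z2) * (a - c) * x1) ≠ 0 := by convert h3 using 1; ring
  have h3b : 1 + y1 * z2 + (y2 * (1 + y1 * z2) + (b - c) * z2) * x1 + z2 * (y1 * (1 + y1 * z2 + (y2 * (1 + y1 * z2) + (b - c) * z2) * x1) - (1 + y1 * z2) * (a - c) * x1) ≠ 0 := by convert h3 using 1; ring
  refine ⟨⟨?_, ?_⟩, ⟨?_, ?_⟩, ?_, ?_⟩ <;> try trivial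
  all_goals field_simp
  all_goals ring
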